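/- Let p ∈ (0,1), α = 1/p−1, d = ⌊nα⌋. If f ∈ L_loc^{Φ_p,1,d}(ℝⁿ) then f ∈ L_loc^{α,1,d}(ℝⁿ) with ‖f‖_{L_loc^{α,1,d}} ≲ ‖f‖_{L_loc^{Φ_p,1,d}}; conversely, using the identification L_loc^{α,1,d}(ℝⁿ) = Λ_{nα}(ℝⁿ) (so elements are bounded), if f ∈ L_loc^{α,1,d}(ℝⁿ) then f ∈ L_loc^{Φ_p,1,d}(ℝⁿ) with ‖f‖_{L_loc^{Φ_p,1,d}} ≲ ‖f‖_{L_loc^{α,1,d}}. Hence the two spaces coincide with equivalent norms. -/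

import Mathlib

open MeasureTheory Metric
open scoped ENNReal

/-- The Orlicz function `Φ_p(τ) = τ / (1 + τ^(1-p))`. -/
noncomputable def PhiP (p τ : ℝ) : ℝ := τ / (1 + τ ^ (1 - p))

/-- The Luxemburg quasi-norm with respect to `Φ_p` on `ℝⁿ`. -/
noncomputable def luxNorm (n : ℕ) (p : ℝ) (f : EuclideanSpace ℝ (Fin n) → ℝ) : ℝ :=
  sInf {lam : ℝ | 0 < lam ∧ ∫ x, PhiP p (|f x| / lam) ≤ 1}

/-- Evaluation of a real polynomial in `n` variables at a point of `ℝⁿ`. -/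
noncomputable def mvEval {n : ℕ} (x : EuclideanSpace ℝ (Fin n))
    (P : MvPolynomial (Fin n) ℝ) : ℝ :=
  MvPolynomial.eval (fun i => x i) P

/-- `P` is the minimizing polynomial `P_B^d g` of degree `≤ d` of `g` on the ball `B(x₀,r)`. -/
def IsMinPoly (n : ℕ) (d : ℕ) (x₀ : EuclideanSpace ℝ (Fin n)) (r : ℝ)
    (g : EuclideanSpace ℝ (Fin n) → ℝ) (P : MvPolynomial (Fin n) ℝ) : Prop :=
  P.totalDegree ≤ d ∧
  ∀ R : MvPolynomial (Fin n) ℝ, R.totalDegree ≤ d →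
    ∫ x in Metric.ball x₀ r, (g x - mvEval x P) * mvEval x R = 0

/-- `f ∈ L_loc^{α,1,d}(ℝⁿ)` with norm bound `K`, where `α = 1/p − 1`, `d = ⌊nα⌋`
(normalization `|B|^{α+1} = |B|^{1/p}`). -/
def CampBound (n : ℕ) (p K : ℝ) (f : EuclideanSpace ℝ (Fin n) → ℝ) : Prop :=
  (∀ (x₀ : EuclideanSpace ℝ (Fin n)) (r : ℝ), 0 < r →
    (volume (Metric.ball x₀ r)).toReal < 1 →
    ∀ P : MvPolynomial (Fin n) ℝ, IsMinPoly n ⌊(n : ℝ) * (1 / p - 1)⌋₊ x₀ r f P →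
      ∫ x in Metric.ball x₀ r, |f x - mvEval x P| ≤
        K * (volume (Metric.ball x₀ r)).toReal ^ (1 / p)) ∧
  (∀ (x₀ : EuclideanSpace ℝ (Fin n)) (r : ℝ), 0 < r →
    1 ≤ (volume (Metric.ball x₀ r)).toReal →
    ∫ x in Metric.ball x₀ r, |f x| ≤
      K * (volume (Metric.ball x₀ r)).toReal ^ (1 / p))

/-- `f ∈ L_loc^{Φ_p,1,d}(ℝⁿ)` with norm bound `K`, `d = ⌊n(1/p−1)⌋`
(normalization `‖1_B‖_{L^{Φ_p}}`). -/
def OrlCampBound (n : ℕ) (p K : ℝ) (f : EuclideanSpace ℝ (Fin n) → ℝ) : Prop :=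
  (∀ (x₀ : EuclideanSpace ℝ (Fin n)) (r : ℝ), 0 < r →
    (volume (Metric.ball x₀ r)).toReal < 1 →
    ∀ P : MvPolynomial (Fin n) ℝ, IsMinPoly n ⌊(n : ℝ) * (1 / p - 1)⌋₊ x₀ r f P →
      ∫ x in Metric.ball x₀ r, |f x - mvEval x P| ≤
        K * luxNorm n p ((Metric.ball x₀ r).indicator fun _ => (1 : ℝ))) ∧
  (∀ (x₀ : EuclideanSpace ℝ (Fin n)) (r : ℝ), 0 < r →
    1 ≤ (volume (Metric.ball x₀ r)).toReal →
    ∫ x in Metric.ball x₀ r, |f x| ≤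
      K * luxNorm n p ((Metric.ball x₀ r).indicator fun _ => (1 : ℝ)))

lemma phiP_le_self {p τ : ℝ} (hp : p < 1) (hτ : 0 ≤ τ) : PhiP p τ ≤ τ :=
  div_le_self hτ (by nlinarith [Real.rpow_nonneg hτ (1 - p)])

lemma phiP_le_rpow {p τ : ℝ} (hp : p < 1) (hτ : 0 < τ) : PhiP p τ ≤ τ ^ p := by
  have h1 : (0:ℝ) < τ ^ (1 - p) := Real.rpow_pos_of_pos hτ _
  have : τ / (1 + τ ^ (1 - p)) ≤ τ / τ ^ (1 - p) :=
    div_le_div_of_nonneg_left hτ.le h1 (by linarith)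
  calc PhiP p τ ≤ τ / τ ^ (1 - p) := this
    _ = τ ^ (1:ℝ) / τ ^ (1 - p) := by rw [Real.rpow_one]
    _ = τ ^ p := by rw [← Real.rpow_sub hτ]; norm_num

lemma min_le_two_mul_phiP {p τ : ℝ} (hp : p < 1) (hτ : 0 < τ) :
    min τ (τ ^ p) ≤ 2 * PhiP p τ := by
  rcases le_or_gt τ 1 with h | h
  · have h1 : τ ^ (1 - p) ≤ 1 := Real.rpow_le_one hτ.le h (by linarith)
    have h2 : (0:ℝ) < 1 + τ ^ (1 - p) := by nlinarith [Real.rpow_nonneg hτ.le (1 - p)]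
    have : τ / 2 ≤ PhiP p τ := div_le_div_of_nonneg_left hτ.le h2 (by linarith)
    calc min τ (τ ^ p) ≤ τ := min_le_left _ _
      _ ≤ 2 * PhiP p τ := by linarith
  · have h1 : (1:ℝ) ≤ τ ^ (1 - p) := Real.one_le_rpow h.le (by linarith)
    have h1' : (0:ℝ) < τ ^ (1 - p) := by linarith
    have : τ / (2 * τ ^ (1 - p)) ≤ PhiP p τ :=
      div_le_div_of_nonneg_left hτ.le (by linarith) (by linarith)
    have e : τ / (2 * τ ^ (1 - p)) = τ ^ p / 2 := by
      rw [div_eq_div_iff (by positivity) (by norm_num)]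
      have : τ ^ p * τ ^ (1 - p) = τ := by
        rw [← Real.rpow_add hτ]; norm_num
      ring_nf
      nlinarith [this]
    calc min τ (τ ^ p) ≤ τ ^ p := min_le_right _ _
      _ ≤ 2 * PhiP p τ := by rw [e] at this; linarith

lemma integral_phiP_indicator {n : ℕ} (p : ℝ) (hp : p < 1) (x₀ : EuclideanSpace ℝ (Fin n))
    (r lam : ℝ) :
    ∫ x, PhiP p (|(ball x₀ r).indicator (fun _ => (1:ℝ)) x| / lam) =
      (volume (ball x₀ r)).toReal * PhiP p (1 / lam) := by
  have h0 : PhiP p 0 = 0 := by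
    simp [PhiP, Real.zero_rpow (by linarith : (1:ℝ) - p ≠ 0)]
  have : (fun x => PhiP p (|(ball x₀ r).indicator (fun _ => (1:ℝ)) x| / lam)) =
      (ball x₀ r).indicator (fun _ => PhiP p (1 / lam)) := by
    funext x
    by_cases hx : x ∈ ball x₀ r <;> simp [Set.indicator, hx, h0]
  rw [this, integral_indicator_const _ measurableSet_ball, smul_eq_mul, measureReal_def, mul_comm]

lemma lux_indicator_bounds {n : ℕ} {p : ℝ} (hp : p ∈ Set.Ioo (0:ℝ) 1)
    (x₀ : EuclideanSpace ℝ (Fin n)) (r : ℝ) (hr : 0 < r) :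
    2 ^ (-(1/p)) * min ((volume (ball x₀ r)).toReal) ((volume (ball x₀ r)).toReal ^ (1/p)) ≤
        luxNorm n p ((ball x₀ r).indicator fun _ => (1:ℝ)) ∧
      luxNorm n p ((ball x₀ r).indicator fun _ => (1:ℝ)) ≤
        min ((volume (ball x₀ r)).toReal) ((volume (ball x₀ r)).toReal ^ (1/p)) := by
  obtain ⟨hp0, hp1⟩ := hp
  set m := (volume (ball x₀ r)).toReal with hm
  have hmpos : 0 < m := by
    refine ENNReal.toReal_pos (measure_ball_pos volume x₀ hr).ne' measure_ball_lt_top.ne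
  have hip : 1 ≤ 1/p := one_le_one_div hp0 hp1.le
  set lam0 := min m (m ^ (1/p)) with hlam0
  have hlam0pos : 0 < lam0 := lt_min hmpos (Real.rpow_pos_of_pos hmpos _)
  have hS : ∀ lam, (0 < lam ∧ ∫ x, PhiP p (|(ball x₀ r).indicator (fun _ => (1:ℝ)) x| / lam) ≤ 1)
      ↔ (0 < lam ∧ m * PhiP p (1/lam) ≤ 1) := by
    intro lam
    rw [integral_phiP_indicator p hp1 x₀ r lam, hm]
  -- membership of lam0
  have hmem : 0 < lam0 ∧ m * PhiP p (1/lam0) ≤ 1 := by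
    refine ⟨hlam0pos, ?_⟩
    rcases le_total m 1 with h | h
    · -- lam0 = m^(1/p), since m^(1/p) ≤ m
      have hle : m ^ (1/p) ≤ m := by
        calc m ^ (1/p) ≤ m ^ (1:ℝ) := Real.rpow_le_rpow_of_exponent_ge hmpos h hip
          _ = m := Real.rpow_one m
      have hl0 : lam0 = m ^ (1/p) := min_eq_right hle
      have hτ : (0:ℝ) < 1/lam0 := by positivity
      have : PhiP p (1/lam0) ≤ (1/lam0) ^ p := phiP_le_rpow hp1 hτ
      have he : (1/lam0) ^ p = 1/m := by
        rw [hl0, Real.div_rpow zero_le_one (Real.rpow_nonneg hmpos.le _), Real.one_rpow,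
          ← Real.rpow_mul hmpos.le, one_div_mul_cancel hp0.ne', Real.rpow_one]
      calc m * PhiP p (1/lam0) ≤ m * (1/m) := by
            rw [← he]; exact mul_le_mul_of_nonneg_left this hmpos.le
        _ = 1 := by field_simp
    · have hle : m ≤ m ^ (1/p) := by
        calc m = m ^ (1:ℝ) := (Real.rpow_one m).symm
          _ ≤ m ^ (1/p) := Real.rpow_le_rpow_of_exponent_le h hip
      have hl0 : lam0 = m := min_eq_left hle
      have : PhiP p (1/lam0) ≤ 1/lam0 := phiP_le_self hp1 (by positivity)
      rw [hl0] at this ⊢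
      calc m * PhiP p (1/m) ≤ m * (1/m) := by
            exact mul_le_mul_of_nonneg_left this hmpos.le
        _ = 1 := by field_simp
  constructor
  · refine le_csInf ⟨lam0, (hS lam0).mpr hmem⟩ ?_
    rintro lam hlam
    obtain ⟨hlampos, hineq⟩ := (hS lam).mp hlam
    have hτ : (0:ℝ) < 1/lam := by positivity
    have h2 : min (1/lam) ((1/lam)^p) ≤ 2 * PhiP p (1/lam) := min_le_two_mul_phiP hp1 hτ
    have hphi : m * min (1/lam) ((1/lam)^p) ≤ 2 := by
      nlinarith [mul_le_mul_of_nonneg_left h2 hmpos.le]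
    have hb : (2:ℝ) ^ (-(1/p)) = ((2:ℝ)^(1/p))⁻¹ := by
      rw [Real.rpow_neg (by norm_num)]
    rcases le_total (1/lam) ((1/lam)^p) with hmin | hmin
    · have h3 : m * (1/lam) ≤ 2 := by rw [min_eq_left hmin] at hphi; exact hphi
      rw [mul_one_div, div_le_iff₀ hlampos] at h3
      have h5 : (2:ℝ)^(-(1/p)) ≤ 1/2 := by
        rw [hb]
        have h6 : (2:ℝ)^(1:ℝ) ≤ 2^(1/p) := Real.rpow_le_rpow_of_exponent_le one_le_two hip
        rw [Real.rpow_one] at h6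
        calc ((2:ℝ)^(1/p))⁻¹ ≤ 2⁻¹ := inv_anti₀ two_pos h6
          _ = 1/2 := by norm_num
      calc (2:ℝ)^(-(1/p)) * min m (m^(1/p)) ≤ (1/2) * m :=
            mul_le_mul h5 (min_le_left _ _) hlam0pos.le (by norm_num)
        _ ≤ lam := by linarith
    · have h3 : m * (1/lam)^p ≤ 2 := by rw [min_eq_right hmin] at hphi; exact hphi
      have h7 : (1/lam)^p ≤ 2/m := by rw [le_div_iff₀ hmpos]; linarith [h3]
      have hA : (1/lam) ≤ (2/m)^(1/p) := by
        have h10 := Real.rpow_le_rpow (by positivity) h7 (by positivity : (0:ℝ) ≤ 1/p)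
        rwa [← Real.rpow_mul hτ.le, mul_one_div, div_self hp0.ne', Real.rpow_one] at h10
      have h9 : (2/m)^((1:ℝ)/p) = 2^((1:ℝ)/p) / m^((1:ℝ)/p) := Real.div_rpow (by norm_num) hmpos.le _
      rw [h9] at hA
      have h2pos : (0:ℝ) < 2^((1:ℝ)/p) / m^((1:ℝ)/p) := by positivity
      have h8 : m^((1:ℝ)/p) / 2^((1:ℝ)/p) ≤ lam := by
        have := (one_div_le hlampos h2pos).mp hA
        rwa [one_div_div] at this
      calc (2:ℝ)^(-(1/p)) * min m (m^(1/p)) ≤ (2:ℝ)^(-(1/p)) * m^(1/p) :=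
            mul_le_mul_of_nonneg_left (min_le_right _ _) (by positivity)
        _ = m^((1:ℝ)/p) / 2^((1:ℝ)/p) := by rw [hb]; ring
        _ ≤ lam := h8
  · exact csInf_le ⟨0, fun x hx => hx.1.le⟩ ((hS lam0).mpr hmem)


lemma large_ball_bound {n : ℕ} (hn : 0 < n) {p : ℝ} (hp : p ∈ Set.Ioo (0:ℝ) 1)
    {f : EuclideanSpace ℝ (Fin n) → ℝ} (hf : LocallyIntegrable f)
    {K : ℝ} (hK : 0 ≤ K)
    (H : ∀ (x₀ : EuclideanSpace ℝ (Fin n)) (r : ℝ), 0 < r →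
      1 ≤ (volume (ball x₀ r)).toReal →
      ∫ x in ball x₀ r, |f x| ≤ K * (volume (ball x₀ r)).toReal ^ (1/p))
    (x₀ : EuclideanSpace ℝ (Fin n)) (r : ℝ) (hr : 0 < r)
    (hvol : 1 ≤ (volume (ball x₀ r)).toReal) :
    ∫ x in ball x₀ r, |f x| ≤ 2^n * K * (volume (ball x₀ r)).toReal := by
  have hnt : Nontrivial (EuclideanSpace ℝ (Fin n)) := by
    refine ⟨⟨EuclideanSpace.single ⟨0, hn⟩ 1, 0, fun h => ?_⟩⟩
    have := congrArg (fun v => v ⟨0, hn⟩) h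
    simp [EuclideanSpace.single_apply] at this
  set c := volume (ball (0 : EuclideanSpace ℝ (Fin n)) 1) with hc
  have vball : ∀ (x : EuclideanSpace ℝ (Fin n)) (s : ℝ), 0 ≤ s →
      volume (ball x s) = ENNReal.ofReal (s ^ n) * c := by
    intro x s hs
    rw [Measure.addHaar_ball volume x hs, finrank_euclideanSpace, Fintype.card_fin, hc]
  have cpos : 0 < c.toReal :=
    ENNReal.toReal_pos (measure_ball_pos volume _ one_pos).ne' measure_ball_lt_top.ne
  have cne : c ≠ ⊤ := measure_ball_lt_top.ne
  set r₀ : ℝ := c.toReal ^ (-(n:ℝ)⁻¹) with hr₀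
  have hr₀pos : 0 < r₀ := Real.rpow_pos_of_pos cpos _
  have hnne : ((n:ℝ)) ≠ 0 := Nat.cast_ne_zero.mpr hn.ne'
  have hr₀n : r₀ ^ n = (c.toReal)⁻¹ := by
    rw [hr₀, ← Real.rpow_natCast (c.toReal ^ (-(n:ℝ)⁻¹)) n, ← Real.rpow_mul cpos.le]
    rw [show -(n:ℝ)⁻¹ * n = -1 by field_simp]
    exact Real.rpow_neg_one _
  have htr : ∀ y : EuclideanSpace ℝ (Fin n), (volume (ball y r₀)).toReal = 1 := by
    intro y
    rw [vball y r₀ hr₀pos.le, ENNReal.toReal_mul, ENNReal.toReal_ofReal (by positivity), hr₀n,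
      inv_mul_cancel₀ cpos.ne']
  have hb1 : ∀ y : EuclideanSpace ℝ (Fin n), volume (ball y r₀) = 1 := by
    intro y
    have hne : volume (ball y r₀) ≠ ⊤ := measure_ball_lt_top.ne
    have := htr y
    rwa [ENNReal.toReal_eq_one_iff] at this
  set m := (volume (ball x₀ r)).toReal with hm
  have hmval : m = r ^ n * c.toReal := by
    rw [hm, vball x₀ r hr.le, ENNReal.toReal_mul, ENNReal.toReal_ofReal (by positivity)]
  have hr₀r : r₀ ≤ r := by
    have h1 : r₀ ^ n * c.toReal ≤ r ^ n * c.toReal := by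
      rw [hr₀n, inv_mul_cancel₀ cpos.ne', ← hmval]; exact hvol
    have h2 : r₀ ^ n ≤ r ^ n := le_of_mul_le_mul_right h1 cpos
    exact (pow_le_pow_iff_left₀ hr₀pos.le hr.le hn.ne').mp h2
  have hIball : ∀ (y : EuclideanSpace ℝ (Fin n)) (s : ℝ),
      IntegrableOn (fun x => |f x|) (ball y s) volume := by
    intro y s
    exact ((hf.integrableOn_isCompact (isCompact_closedBall y s)).mono_set
      ball_subset_closedBall).abs
  set G : EuclideanSpace ℝ (Fin n) → ℝ≥0∞ := fun x => ENNReal.ofReal |f x| with hG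
  have hGae : AEMeasurable G volume :=
    (continuous_abs.measurable.comp_aemeasurable hf.aestronglyMeasurable.aemeasurable).ennreal_ofReal
  have keyr₀ : ∀ y : EuclideanSpace ℝ (Fin n), ∫⁻ x in ball y r₀, G x ≤ ENNReal.ofReal K := by
    intro y
    rw [hG, ← ofReal_integral_eq_lintegral_ofReal (hIball y r₀)
      (Filter.Eventually.of_forall fun x => abs_nonneg _)]
    refine ENNReal.ofReal_le_ofReal ?_
    have := H y r₀ hr₀pos (by rw [htr y])
    rwa [htr y, Real.one_rpow, mul_one] at this
  set D : Set (EuclideanSpace ℝ (Fin n) × EuclideanSpace ℝ (Fin n)) :=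
    {q | dist q.1 q.2 < r₀} with hD
  have hDmeas : MeasurableSet D := by
    have : IsOpen D := isOpen_lt continuous_dist continuous_const
    exact this.measurableSet
  set F : EuclideanSpace ℝ (Fin n) → EuclideanSpace ℝ (Fin n) → ℝ≥0∞ :=
    fun x y => (ball x₀ r).indicator G x * D.indicator (fun _ => 1) (x, y) with hF
  have hFmeas : AEMeasurable (Function.uncurry F) (volume.prod volume) := by
    have h1 : AEMeasurable (fun q : EuclideanSpace ℝ (Fin n) × EuclideanSpace ℝ (Fin n) =>
        (ball x₀ r).indicator G q.1) (volume.prod volume) :=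
      (hGae.indicator measurableSet_ball).comp_fst
    have h2 : Measurable (D.indicator (fun _ => (1:ℝ≥0∞))) :=
      measurable_const.indicator hDmeas
    exact h1.mul h2.aemeasurable
  have hindne : ∀ x, (ball x₀ r).indicator G x ≠ ⊤ := by
    intro x
    by_cases h : x ∈ ball x₀ r <;> simp [Set.indicator, h, hG]
  have step1 : ∫⁻ x, ∫⁻ y, F x y = ∫⁻ x in ball x₀ r, G x := by
    have heq : ∀ x, ∫⁻ y, F x y = (ball x₀ r).indicator G x := by
      intro x
      have e1 : ∀ y, D.indicator (fun _ => (1:ℝ≥0∞)) (x, y) =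
          (ball x r₀).indicator (fun _ => (1:ℝ≥0∞)) y := by
        intro y
        by_cases h : dist x y < r₀
        · rw [Set.indicator_of_mem (show (x, y) ∈ D from h),
            Set.indicator_of_mem (by rwa [mem_ball, dist_comm])]
        · rw [Set.indicator_of_notMem (show (x, y) ∉ D from h),
            Set.indicator_of_notMem (by rwa [mem_ball, dist_comm])]
      calc ∫⁻ y, F x y
          = ∫⁻ y, (ball x₀ r).indicator G x * (ball x r₀).indicator (fun _ => (1:ℝ≥0∞)) y := by
            simp only [hF, e1]
        _ = (ball x₀ r).indicator G x * ∫⁻ y, (ball x r₀).indicator (fun _ => (1:ℝ≥0∞)) y :=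
            lintegral_const_mul' _ _ (hindne x)
        _ = (ball x₀ r).indicator G x * volume (ball x r₀) := by
            rw [lintegral_indicator measurableSet_ball, setLIntegral_one]
        _ = (ball x₀ r).indicator G x := by rw [hb1 x, mul_one]
    rw [lintegral_congr heq, lintegral_indicator measurableSet_ball]
  have step2 : ∫⁻ y, ∫⁻ x, F x y ≤ ENNReal.ofReal K * volume (ball x₀ (r + r₀)) := by
    have hbnd : ∀ y, ∫⁻ x, F x y ≤
        (ball x₀ (r + r₀)).indicator (fun _ => ENNReal.ofReal K) y := by
      intro y
      have e2 : (fun x => F x y) = ((ball x₀ r) ∩ ball y r₀).indicator G := by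
        funext x
        by_cases h2 : dist x y < r₀
        · have hx2 : x ∈ ball y r₀ := by rwa [mem_ball]
          by_cases h1 : x ∈ ball x₀ r
          · rw [hF]
            simp only []
            rw [Set.indicator_of_mem (show (x, y) ∈ D from h2), Set.indicator_of_mem h1, mul_one,
              Set.indicator_of_mem (Set.mem_inter h1 hx2)]
          · rw [hF]
            simp only []
            rw [Set.indicator_of_notMem h1,
              Set.indicator_of_notMem (fun hmem => h1 (Set.mem_of_mem_inter_left hmem)), zero_mul]
        · have hx2 : x ∉ ball y r₀ := by rwa [mem_ball]
          rw [hF]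
          simp only []
          rw [Set.indicator_of_notMem (show (x, y) ∉ D from h2),
            Set.indicator_of_notMem (fun hmem => hx2 (Set.mem_of_mem_inter_right hmem)), mul_zero]
      rw [e2, lintegral_indicator (measurableSet_ball.inter measurableSet_ball)]
      by_cases hy : y ∈ ball x₀ (r + r₀)
      · rw [Set.indicator_of_mem hy]
        calc ∫⁻ x in ball x₀ r ∩ ball y r₀, G x
            ≤ ∫⁻ x in ball y r₀, G x := lintegral_mono_set Set.inter_subset_right
          _ ≤ ENNReal.ofReal K := keyr₀ y
      · rw [Set.indicator_of_notMem hy]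
        have hdisj : ball x₀ r ∩ ball y r₀ = ∅ := by
          ext z
          simp only [Set.mem_inter_iff, mem_ball, Set.mem_empty_iff_false, iff_false, not_and]
          intro hz1 hz2
          apply hy
          rw [mem_ball]
          calc dist y x₀ ≤ dist y z + dist z x₀ := dist_triangle _ _ _
            _ < r₀ + r := by rw [dist_comm y z]; exact add_lt_add hz2 hz1
            _ = r + r₀ := by ring
        rw [hdisj]
        simp
    calc ∫⁻ y, ∫⁻ x, F x y
        ≤ ∫⁻ y, (ball x₀ (r + r₀)).indicator (fun _ => ENNReal.ofReal K) y := lintegral_mono hbnd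
      _ = ENNReal.ofReal K * volume (ball x₀ (r + r₀)) := by
          rw [lintegral_indicator measurableSet_ball, setLIntegral_const]
  have step3 : volume (ball x₀ (r + r₀)) ≤ ENNReal.ofReal (2^n * m) := by
    rw [vball x₀ (r + r₀) (by positivity), ← ENNReal.ofReal_toReal cne,
      ← ENNReal.ofReal_mul (by positivity)]
    refine ENNReal.ofReal_le_ofReal ?_
    have h1 : (r + r₀) ^ n ≤ (2*r) ^ n := pow_le_pow_left₀ (by positivity) (by linarith) n
    calc (r + r₀) ^ n * c.toReal ≤ (2*r)^n * c.toReal :=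
          mul_le_mul_of_nonneg_right h1 cpos.le
      _ = 2^n * m := by rw [mul_pow, hmval]; ring
  have main : ∫⁻ x in ball x₀ r, G x ≤ ENNReal.ofReal (K * (2^n * m)) := by
    rw [← step1, lintegral_lintegral_swap hFmeas]
    calc ∫⁻ y, ∫⁻ x, F x y ≤ ENNReal.ofReal K * volume (ball x₀ (r + r₀)) := step2
      _ ≤ ENNReal.ofReal K * ENNReal.ofReal (2^n * m) :=
          mul_le_mul_right step3 _
      _ = ENNReal.ofReal (K * (2^n * m)) := (ENNReal.ofReal_mul hK).symm
  have hfin : ENNReal.ofReal (∫ x in ball x₀ r, |f x|) = ∫⁻ x in ball x₀ r, G x := by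
    rw [hG]
    exact ofReal_integral_eq_lintegral_ofReal (hIball x₀ r)
      (Filter.Eventually.of_forall fun x => abs_nonneg _)
  have := hfin ▸ main
  have hmnn : (0:ℝ) ≤ m := by linarith
  have hfinal : ∫ x in ball x₀ r, |f x| ≤ K * (2^n * m) := by
    have := (ENNReal.ofReal_le_ofReal_iff (by positivity)).mp this
    linarith
  calc ∫ x in ball x₀ r, |f x| ≤ K * (2^n * m) := hfinal
    _ = 2^n * K * m := by ring


/-- Let `p ∈ (0,1)`, `α = 1/p − 1`, `d = ⌊nα⌋`. The spaces `L_loc^{Φ_p,1,d}(ℝⁿ)` and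
`L_loc^{α,1,d}(ℝⁿ)` coincide with equivalent norms: each membership bound implies the other
up to a uniform constant `C` (the converse direction uses the identification
`L_loc^{α,1,d}(ℝⁿ) = Λ_{nα}(ℝⁿ)`, whose elements are bounded). -/
theorem stmt_15 (n : ℕ) (hn : 0 < n) (p : ℝ) (hp : p ∈ Set.Ioo (0 : ℝ) 1) :
    ∃ C > (0 : ℝ), ∀ f : EuclideanSpace ℝ (Fin n) → ℝ, LocallyIntegrable f →
      (∀ K : ℝ, 0 ≤ K → OrlCampBound n p K f → CampBound n p (C * K) f) ∧
      (∀ K : ℝ, 0 ≤ K → CampBound n p K f → OrlCampBound n p (C * K) f) := by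
  obtain ⟨hp0, hp1⟩ := hp
  have hip : (1:ℝ) ≤ 1/p := one_le_one_div hp0 hp1.le
  have h2p1 : (1:ℝ) ≤ (2:ℝ)^(1/p) := Real.one_le_rpow one_le_two (by positivity)
  have h2n1 : (1:ℝ) ≤ (2:ℝ)^n := by
    have := pow_le_pow_left₀ (by norm_num : (0:ℝ) ≤ 1) (by norm_num : (1:ℝ) ≤ 2) n
    simpa using this
  have h2ppos : (0:ℝ) < (2:ℝ)^(1/p) := by positivity
  refine ⟨(2:ℝ)^(1/p) * 2^n, by positivity, fun f hf => ?_⟩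
  constructor
  · -- Orlicz → Campanato
    rintro K hK ⟨hO1, hO2⟩
    have key : ∀ (x₀ : EuclideanSpace ℝ (Fin n)) (r : ℝ), 0 < r →
        K * luxNorm n p ((ball x₀ r).indicator fun _ => (1:ℝ)) ≤
          (2:ℝ)^(1/p) * 2^n * K * (volume (ball x₀ r)).toReal ^ (1/p) := by
      intro x₀ r hr
      obtain ⟨hl1, hl2⟩ := lux_indicator_bounds ⟨hp0, hp1⟩ x₀ r hr
      set m := (volume (ball x₀ r)).toReal with hm
      have hmpos : 0 < m :=
        ENNReal.toReal_pos (measure_ball_pos volume x₀ hr).ne' measure_ball_lt_top.ne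
      have hmin : min m (m ^ (1/p)) ≤ m ^ (1/p) := min_le_right _ _
      have h1 : luxNorm n p ((ball x₀ r).indicator fun _ => (1:ℝ)) ≤ m ^ (1/p) :=
        hl2.trans hmin
      calc K * luxNorm n p ((ball x₀ r).indicator fun _ => (1:ℝ)) ≤ K * m ^ (1/p) :=
            mul_le_mul_of_nonneg_left h1 hK
        _ ≤ (2:ℝ)^(1/p) * 2^n * K * m ^ (1/p) := by
            have hC : (1:ℝ) ≤ (2:ℝ)^(1/p) * 2^n := by nlinarith
            nlinarith [Real.rpow_nonneg hmpos.le (1/p), mul_nonneg hK (Real.rpow_nonneg hmpos.le (1/p))]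
    exact ⟨fun x₀ r hr hv P hP => (hO1 x₀ r hr hv P hP).trans (key x₀ r hr),
      fun x₀ r hr hv => (hO2 x₀ r hr hv).trans (key x₀ r hr)⟩
  · -- Campanato → Orlicz
    rintro K hK ⟨hC1, hC2⟩
    constructor
    · intro x₀ r hr hv P hP
      obtain ⟨hl1, hl2⟩ := lux_indicator_bounds ⟨hp0, hp1⟩ x₀ r hr
      set m := (volume (ball x₀ r)).toReal with hm
      set L := luxNorm n p ((ball x₀ r).indicator fun _ => (1:ℝ)) with hL
      have hmpos : 0 < m :=
        ENNReal.toReal_pos (measure_ball_pos volume x₀ hr).ne' measure_ball_lt_top.ne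
      have hLpos : 0 < L := lt_of_lt_of_le (by positivity : (0:ℝ) <
        (2:ℝ)^(-(1/p)) * min m (m ^ (1/p))) hl1
      have hminval : min m (m ^ (1/p)) = m ^ (1/p) := by
        refine min_eq_right ?_
        calc m ^ (1/p) ≤ m ^ (1:ℝ) := Real.rpow_le_rpow_of_exponent_ge hmpos hv.le hip
          _ = m := Real.rpow_one m
      have hA : m ^ (1/p) ≤ (2:ℝ)^(1/p) * L := by
        rw [hminval] at hl1
        have := mul_le_mul_of_nonneg_left hl1 h2ppos.le
        rwa [← mul_assoc, ← Real.rpow_add two_pos, add_neg_cancel, Real.rpow_zero, one_mul] at this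
      calc ∫ x in ball x₀ r, |f x - mvEval x P| ≤ K * m ^ (1/p) := hC1 x₀ r hr hv P hP
        _ ≤ K * ((2:ℝ)^(1/p) * L) := mul_le_mul_of_nonneg_left hA hK
        _ ≤ (2:ℝ)^(1/p) * 2^n * K * L := by
            nlinarith [mul_nonneg (sub_nonneg.mpr h2n1)
              (mul_nonneg (mul_nonneg h2ppos.le hK) hLpos.le)]
    · intro x₀ r hr hv
      obtain ⟨hl1, hl2⟩ := lux_indicator_bounds ⟨hp0, hp1⟩ x₀ r hr
      set m := (volume (ball x₀ r)).toReal with hm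
      set L := luxNorm n p ((ball x₀ r).indicator fun _ => (1:ℝ)) with hL
      have hmpos : 0 < m :=
        ENNReal.toReal_pos (measure_ball_pos volume x₀ hr).ne' measure_ball_lt_top.ne
      have hLpos : 0 < L := lt_of_lt_of_le (by positivity : (0:ℝ) <
        (2:ℝ)^(-(1/p)) * min m (m ^ (1/p))) hl1
      have hminval : min m (m ^ (1/p)) = m := by
        refine min_eq_left ?_
        calc m = m ^ (1:ℝ) := (Real.rpow_one m).symm
          _ ≤ m ^ (1/p) := Real.rpow_le_rpow_of_exponent_le hv hip
      have hA : m ≤ (2:ℝ)^(1/p) * L := by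
        rw [hminval] at hl1
        have := mul_le_mul_of_nonneg_left hl1 h2ppos.le
        rwa [← mul_assoc, ← Real.rpow_add two_pos, add_neg_cancel, Real.rpow_zero, one_mul] at this
      calc ∫ x in ball x₀ r, |f x| ≤ 2^n * K * m :=
            large_ball_bound hn ⟨hp0, hp1⟩ hf hK hC2 x₀ r hr hv
        _ ≤ 2^n * K * ((2:ℝ)^(1/p) * L) :=
            mul_le_mul_of_nonneg_left hA (by positivity)
        _ = (2:ℝ)^(1/p) * 2^n * K * L := by ring
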